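/- There exists a constant C, independent of ε and N, such that ‖E_12 − E_12^I‖_{L^∞(Ω_2)} ≤ C N^{-5/2} and ‖(E_12 − E_12^I)_x‖_{L^∞(Ω_1)} ≤ C ε^{-1} N^{-5/2}, where the subscript x denotes the partial derivative with respect to x (taken rectangle-by-rectangle for the piecewise bilinear interpolant, i.e. an essential supremum). -/

import Mathlib

open MeasureTheory Real Set

noncomputable section

/-- First-order partial derivative in the x-direction. -/
def pdx (f : ℝ × ℝ → ℝ) : ℝ × ℝ → ℝ := fun p => fderiv ℝ f p (1, 0)

/-- First-order partial derivative in the y-direction. -/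
def pdy (f : ℝ × ℝ → ℝ) : ℝ × ℝ → ℝ := fun p => fderiv ℝ f p (0, 1)

/-- Mixed partial derivative `∂_x^i ∂_y^j`. -/
def pd (i j : ℕ) (f : ℝ × ℝ → ℝ) : ℝ × ℝ → ℝ := pdx^[i] (pdy^[j] f)

/-- A function coincides with a bilinear polynomial `a + bx + cy + dxy` on a set. -/
def IsBilinearOn (f : ℝ × ℝ → ℝ) (s : Set (ℝ × ℝ)) : Prop :=
  ∃ a b c d : ℝ, ∀ p ∈ s, f p = a + b * p.1 + c * p.2 + d * (p.1 * p.2)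

/-- The Shishkin-mesh node abscissas. -/
def meshX (N : ℕ) (lx : ℝ) (i : ℕ) : ℝ :=
  if i ≤ N / 2 then 2 * (i : ℝ) * (1 - lx) / (N : ℝ)
  else 1 - 2 * ((N : ℝ) - (i : ℝ)) * lx / (N : ℝ)

/-- The Shishkin-mesh node ordinates. -/
def meshY (N : ℕ) (ly : ℝ) (j : ℕ) : ℝ :=
  if j ≤ N / 3 then 3 * (j : ℝ) * ly / (N : ℝ)
  else if j ≤ 2 * N / 3 then
    (3 * (j : ℝ) / (N : ℝ) - 1) - 3 * (2 * (j : ℝ) - (N : ℝ)) * ly / (N : ℝ)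
  else 1 - 3 * ((N : ℝ) - (j : ℝ)) * ly / (N : ℝ)

/-- The mesh rectangle `τ_{ij} = [x_{i-1}, x_i] × [y_{j-1}, y_j]`. -/
def meshRect (N : ℕ) (lx ly : ℝ) (i j : ℕ) : Set (ℝ × ℝ) :=
  Icc (meshX N lx (i - 1)) (meshX N lx i) ×ˢ Icc (meshY N ly (j - 1)) (meshY N ly j)

def OmegaS (lx ly : ℝ) : Set (ℝ × ℝ) := Icc 0 (1 - lx) ×ˢ Icc ly (1 - ly)
def Omega1R (lx ly : ℝ) : Set (ℝ × ℝ) := Icc (1 - lx) 1 ×ˢ Icc ly (1 - ly)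
def Omega2R (lx ly : ℝ) : Set (ℝ × ℝ) := Icc 0 (1 - lx) ×ˢ (Icc 0 ly ∪ Icc (1 - ly) 1)
def Omega12R (lx ly : ℝ) : Set (ℝ × ℝ) := Icc (1 - lx) 1 ×ˢ (Icc 0 ly ∪ Icc (1 - ly) 1)

/-- Basic assumptions on the Shishkin mesh data (with `ρ = 2.5`). -/
def ShishkinHyp (N : ℕ) (ε β lx ly : ℝ) : Prop :=
  0 < N ∧ 6 ∣ N ∧ 0 < ε ∧ ε ≤ (N : ℝ)⁻¹ ∧ 0 < β ∧
  lx = 2.5 * ε / β * Real.log (N : ℝ) ∧ ly = 2.5 * Real.sqrt ε * Real.log (N : ℝ) ∧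
  lx ≤ 1 / 2 ∧ ly ≤ 1 / 4

/-- `gI` is the piecewise-bilinear nodal interpolant of `g` on the Shishkin mesh. -/
def IsMeshInterpolant (N : ℕ) (lx ly : ℝ) (g gI : ℝ × ℝ → ℝ) : Prop :=
  Continuous gI ∧
  (∀ i j : ℕ, 1 ≤ i → i ≤ N → 1 ≤ j → j ≤ N → IsBilinearOn gI (meshRect N lx ly i j)) ∧
  (∀ i j : ℕ, i ≤ N → j ≤ N →
    gI (meshX N lx i, meshY N ly j) = g (meshX N lx i, meshY N ly j))

def UnitSq : Set (ℝ × ℝ) := Icc 0 1 ×ˢ Icc 0 1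

/-- Bounds on the regular part `S` of the solution decomposition. -/
def BoundS (C0 : ℝ) (S : ℝ × ℝ → ℝ) : Prop :=
  ContDiff ℝ 3 S ∧ ∀ i j : ℕ, i + j ≤ 3 → ∀ p ∈ UnitSq, |pd i j S p| ≤ C0

/-- Bounds on the exponential-layer part `E₁`. -/
def BoundE1 (ε β C0 : ℝ) (E1 : ℝ × ℝ → ℝ) : Prop :=
  ContDiff ℝ 3 E1 ∧ ∀ i j : ℕ, i + j ≤ 3 → ∀ p ∈ UnitSq,
    |pd i j E1 p| ≤ C0 * ε ^ (-(i : ℝ)) * Real.exp (-β * (1 - p.1) / ε)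

/-- Bounds on the characteristic-layer part `E₂`. -/
def BoundE2 (ε C0 : ℝ) (E2 : ℝ × ℝ → ℝ) : Prop :=
  ContDiff ℝ 3 E2 ∧ ∀ i j : ℕ, i + j ≤ 3 → ∀ p ∈ UnitSq,
    |pd i j E2 p| ≤ C0 * ε ^ (-(j : ℝ) / 2) *
      (Real.exp (-p.2 / Real.sqrt ε) + Real.exp (-(1 - p.2) / Real.sqrt ε))

/-- Bounds on the corner-layer part `E₁₂`. -/
def BoundE12 (ε β C0 : ℝ) (E12 : ℝ × ℝ → ℝ) : Prop :=
  ContDiff ℝ 3 E12 ∧ ∀ i j : ℕ, i + j ≤ 3 → ∀ p ∈ UnitSq,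
    |pd i j E12 p| ≤ C0 * ε ^ (-((i : ℝ) + (j : ℝ) / 2)) * Real.exp (-β * (1 - p.1) / ε) *
      (Real.exp (-p.2 / Real.sqrt ε) + Real.exp (-(1 - p.2) / Real.sqrt ε))

/-- Membership in the bilinear finite element space `V^N`. -/
def MemVN (N : ℕ) (lx ly : ℝ) (v : ℝ × ℝ → ℝ) : Prop :=
  Continuous v ∧
  (∀ p ∈ UnitSq, (p.1 = 0 ∨ p.1 = 1 ∨ p.2 = 0 ∨ p.2 = 1) → v p = 0) ∧
  ∀ i j : ℕ, 1 ≤ i → i ≤ N → 1 ≤ j → j ≤ N → IsBilinearOn v (meshRect N lx ly i j)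

/-- The SDFEM stabilization parameter `δ`. -/
def sdDelta (N : ℕ) (lx ly Cstar : ℝ) : ℝ × ℝ → ℝ :=
  (OmegaS lx ly ∪ Omega2R lx ly).indicator fun _ => Cstar / (N : ℝ)

/-- The SDFEM bilinear form `B`. -/
def Bform (N : ℕ) (lx ly ε b c Cstar : ℝ) (v w : ℝ × ℝ → ℝ) : ℝ :=
  ∫ p in UnitSq,
    (ε * (pdx v p * pdx w p + pdy v p * pdy w p)
      + (b * pdx v p + c * v p) * w p
      + (b * pdx v p + c * v p) * (sdDelta N lx ly Cstar p * (b * pdx w p)))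

/-- The square of the SDFEM energy norm `|||·|||`. -/
def energySq (N : ℕ) (lx ly ε b c Cstar : ℝ) (v : ℝ × ℝ → ℝ) : ℝ :=
  ∫ p in UnitSq,
    ((ε + b ^ 2 * sdDelta N lx ly Cstar p) * pdx v p ^ 2
      + ε * pdy v p ^ 2 + c * v p ^ 2)

/-- The neighbourhood `Ω₀` of the point `(xs, ys)`. -/
def OmegaZero (N : ℕ) (xs ys K sx sy : ℝ) : Set (ℝ × ℝ) :=
  {p : ℝ × ℝ | p ∈ Ioo (0 : ℝ) 1 ×ˢ Ioo (0 : ℝ) 1 ∧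
    p.1 - xs ≤ K * sx * Real.log (N : ℝ) ∧ |p.2 - ys| ≤ K * sy * Real.log (N : ℝ)}

/-- `Ω₀'`: the smallest union of mesh rectangles containing `Ω₀`. -/
def OmegaZero' (N : ℕ) (lx ly xs ys K sx sy : ℝ) : Set (ℝ × ℝ) :=
  ⋃ i ∈ Finset.Icc 1 N, ⋃ j ∈ Finset.Icc 1 N,
    ⋃ (_ : volume (OmegaZero N xs ys K sx sy ∩ meshRect N lx ly i j) ≠ 0),
      meshRect N lx ly i j


/- ### Auxiliary lemmas -/

lemma exists_index (f : ℕ → ℝ) (M : ℕ) (hM : 1 ≤ M) (x : ℝ) (h0 : f 0 ≤ x) (hMx : x ≤ f M) :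
    ∃ i, 1 ≤ i ∧ i ≤ M ∧ f (i - 1) ≤ x ∧ x ≤ f i := by
  induction M with
  | zero => omega
  | succ M ih =>
    rcases Nat.eq_zero_or_pos M with h|h
    · subst h; exact ⟨1, le_refl _, le_refl _, h0, hMx⟩
    · by_cases hx : x ≤ f M
      · obtain ⟨i, h1, h2, h3, h4⟩ := ih h hx
        exact ⟨i, h1, by omega, h3, h4⟩
      · exact ⟨M + 1, by omega, le_refl _, by simpa using le_of_not_ge hx, hMx⟩

lemma affine_abs_le {a b t u v : ℝ} (ht : t ∈ Icc a b) :
    |u + v * t| ≤ max |u + v * a| |u + v * b| := by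
  rcases le_total 0 v with hv | hv
  · exact abs_le_max_abs_abs (by nlinarith [ht.1]) (by nlinarith [ht.2])
  · rw [max_comm]; exact abs_le_max_abs_abs (by nlinarith [ht.2]) (by nlinarith [ht.1])

lemma bilinear_abs_le {a b c d xa xb ya yb x y K : ℝ}
    (hx : x ∈ Icc xa xb) (hy : y ∈ Icc ya yb)
    (h1 : |a + b * xa + c * ya + d * (xa * ya)| ≤ K)
    (h2 : |a + b * xb + c * ya + d * (xb * ya)| ≤ K)
    (h3 : |a + b * xa + c * yb + d * (xa * yb)| ≤ K)
    (h4 : |a + b * xb + c * yb + d * (xb * yb)| ≤ K) :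
    |a + b * x + c * y + d * (x * y)| ≤ K := by
  have e1 : |a + b * x + c * y + d * (x * y)| = |(a + c * y) + (b + d * y) * x| := by
    congr 1; ring
  rw [e1]
  refine le_trans (affine_abs_le hx) (max_le ?_ ?_)
  · have e2 : |(a + c * y) + (b + d * y) * xa| = |(a + b * xa) + (c + d * xa) * y| := by
      congr 1; ring
    rw [e2]
    refine le_trans (affine_abs_le hy) (max_le ?_ ?_)
    · calc |(a + b * xa) + (c + d * xa) * ya| = |a + b * xa + c * ya + d * (xa * ya)| := by
            congr 1; ring
        _ ≤ K := h1
    · calc |(a + b * xa) + (c + d * xa) * yb| = |a + b * xa + c * yb + d * (xa * yb)| := by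
            congr 1; ring
        _ ≤ K := h3
  · have e2 : |(a + c * y) + (b + d * y) * xb| = |(a + b * xb) + (c + d * xb) * y| := by
      congr 1; ring
    rw [e2]
    refine le_trans (affine_abs_le hy) (max_le ?_ ?_)
    · calc |(a + b * xb) + (c + d * xb) * ya| = |a + b * xb + c * ya + d * (xb * ya)| := by
            congr 1; ring
        _ ≤ K := h2
    · calc |(a + b * xb) + (c + d * xb) * yb| = |a + b * xb + c * yb + d * (xb * yb)| := by
            congr 1; ring
        _ ≤ K := h4

lemma hasFDerivAt_bilin (a b c d : ℝ) (p : ℝ × ℝ) :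
    HasFDerivAt (fun q : ℝ × ℝ => a + b * q.1 + c * q.2 + d * (q.1 * q.2))
      (0 + b • ContinuousLinearMap.fst ℝ ℝ ℝ + c • ContinuousLinearMap.snd ℝ ℝ ℝ
        + d • (p.1 • ContinuousLinearMap.snd ℝ ℝ ℝ + p.2 • ContinuousLinearMap.fst ℝ ℝ ℝ)) p := by
  have h1 : HasFDerivAt (fun q : ℝ × ℝ => q.1) (ContinuousLinearMap.fst ℝ ℝ ℝ) p :=
    hasFDerivAt_fst
  have h2 : HasFDerivAt (fun q : ℝ × ℝ => q.2) (ContinuousLinearMap.snd ℝ ℝ ℝ) p :=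
    hasFDerivAt_snd
  exact (((hasFDerivAt_const a p).add (h1.const_mul b)).add (h2.const_mul c)).add
    ((h1.mul h2).const_mul d)

lemma pdx_bilin (a b c d : ℝ) (p : ℝ × ℝ) :
    pdx (fun q : ℝ × ℝ => a + b * q.1 + c * q.2 + d * (q.1 * q.2)) p = b + d * p.2 := by
  rw [pdx, (hasFDerivAt_bilin a b c d p).fderiv]
  simp [ContinuousLinearMap.smul_apply, mul_comm]

section MeshLemmas

variable {m : ℕ} {lx ly : ℝ}

lemma mcast (hm : 1 ≤ m) : (1:ℝ) ≤ (m:ℝ) := by exact_mod_cast hm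

lemma meshX_zero : meshX (6*m) lx 0 = 0 := by simp [meshX]

lemma meshX_half (hm : 1 ≤ m) : meshX (6*m) lx (3*m) = 1 - lx := by
  have h : (3*m) ≤ (6*m)/2 := by omega
  have hm' := mcast hm
  rw [meshX, if_pos h]
  push_cast
  field_simp
  ring

lemma meshX_le (hm : 1 ≤ m) (hlx : 0 ≤ lx) (hlx2 : lx ≤ 1/2) {i : ℕ} (hi : i ≤ 3*m) :
    0 ≤ meshX (6*m) lx i ∧ meshX (6*m) lx i ≤ 1 - lx := by
  have h : i ≤ (6*m)/2 := by omega
  have hm' := mcast hm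
  have hi' : (i:ℝ) ≤ 3*m := by exact_mod_cast hi
  have hi0 : (0:ℝ) ≤ (i:ℝ) := Nat.cast_nonneg i
  rw [meshX, if_pos h]
  push_cast
  constructor
  · apply div_nonneg _ (by positivity)
    nlinarith
  · rw [div_le_iff₀ (by positivity : (0:ℝ) < 6*(m:ℝ))]
    nlinarith

lemma meshX_mem (hm : 1 ≤ m) (hlx : 0 ≤ lx) (hlx2 : lx ≤ 1/2) {i : ℕ} (hi : i ≤ 6*m) :
    meshX (6*m) lx i ∈ Icc (0:ℝ) 1 := by
  have hm' := mcast hm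
  by_cases h : i ≤ (6*m)/2
  · obtain ⟨h1, h2⟩ := meshX_le hm hlx hlx2 (i := i) (by omega)
    exact ⟨h1, by linarith⟩
  · rw [meshX, if_neg h]
    have hi1 : (3:ℝ)*m + 1 ≤ (i:ℝ) := by exact_mod_cast (by omega : 3*m+1 ≤ i)
    have hi2 : (i:ℝ) ≤ 6*m := by exact_mod_cast hi
    push_cast
    constructor
    · have : 2 * ((6:ℝ)*m - i) * lx / (6*m) ≤ 1/2 := by
        rw [div_le_iff₀ (by positivity : (0:ℝ) < 6*(m:ℝ))]
        nlinarith
      linarith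
    · have : 0 ≤ 2 * ((6:ℝ)*m - i) * lx / (6*m) :=
        div_nonneg (by nlinarith) (by positivity)
      linarith

lemma meshY_zero : meshY (6*m) ly 0 = 0 := by simp [meshY]

lemma meshY_third (hm : 1 ≤ m) : meshY (6*m) ly (2*m) = ly := by
  have h : (2*m) ≤ (6*m)/3 := by omega
  have hm' := mcast hm
  rw [meshY, if_pos h]
  push_cast
  field_simp
  ring

lemma meshY_twothird (hm : 1 ≤ m) : meshY (6*m) ly (4*m) = 1 - ly := by
  have h1 : ¬ (4*m) ≤ (6*m)/3 := by omega
  have h2 : (4*m) ≤ 2*(6*m)/3 := by omega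
  have hm' := mcast hm
  rw [meshY, if_neg h1, if_pos h2]
  push_cast
  field_simp
  ring

lemma meshY_one (hm : 1 ≤ m) : meshY (6*m) ly (6*m) = 1 := by
  have h1 : ¬ (6*m) ≤ (6*m)/3 := by omega
  have h2 : ¬ (6*m) ≤ 2*(6*m)/3 := by omega
  rw [meshY, if_neg h1, if_neg h2]
  push_cast
  ring

lemma meshY_low (hm : 1 ≤ m) (hly : 0 ≤ ly) {j : ℕ} (hj : j ≤ 2*m) :
    0 ≤ meshY (6*m) ly j ∧ meshY (6*m) ly j ≤ ly := by
  have h : j ≤ (6*m)/3 := by omega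
  have hm' := mcast hm
  have hj' : (j:ℝ) ≤ 2*m := by exact_mod_cast hj
  have hj0 : (0:ℝ) ≤ (j:ℝ) := Nat.cast_nonneg j
  rw [meshY, if_pos h]
  push_cast
  refine ⟨by positivity, ?_⟩
  rw [div_le_iff₀ (by positivity : (0:ℝ) < 6*(m:ℝ))]
  nlinarith

lemma meshY_ge_ly (hm : 1 ≤ m) (hly : 0 ≤ ly) (hly4 : ly ≤ 1/4) {j : ℕ}
    (hj1 : 2*m ≤ j) (hj2 : j ≤ 6*m) : ly ≤ meshY (6*m) ly j := by
  have hm' := mcast hm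
  rcases eq_or_lt_of_le hj1 with h|h
  · rw [← h, meshY_third hm]
  · have h1 : ¬ j ≤ (6*m)/3 := by omega
    have hj1' : (2:ℝ)*m + 1 ≤ (j:ℝ) := by exact_mod_cast (by omega : 2*m+1 ≤ j)
    have hj2' : (j:ℝ) ≤ 6*m := by exact_mod_cast hj2
    rw [meshY, if_neg h1]
    by_cases h2 : j ≤ 2*(6*m)/3
    · rw [if_pos h2]
      have hj3 : (j:ℝ) ≤ 4*m := by exact_mod_cast (by omega : j ≤ 4*m)
      push_cast
      rw [← sub_nonneg]
      have h6 : (0:ℝ) < 6*(m:ℝ) := by positivity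
      have key : (3 * (j:ℝ) / (6*m) - 1) - 3*(2*(j:ℝ) - 6*m)*ly/(6*m) - ly
          = ((j:ℝ) - 2*m)*(3 - 6*ly)/(6*m) := by field_simp; ring
      have : 0 ≤ ((j:ℝ) - 2*m)*(3 - 6*ly)/(6*m) :=
        div_nonneg (mul_nonneg (by linarith) (by linarith)) (by positivity)
      linarith [key]
    · rw [if_neg h2]
      have hj4 : (4:ℝ)*m + 1 ≤ (j:ℝ) := by exact_mod_cast (by omega : 4*m+1 ≤ j)
      push_cast
      have : 3 * ((6:ℝ)*m - j) * ly / (6*m) ≤ ly := by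
        rw [div_le_iff₀ (by positivity : (0:ℝ) < 6*(m:ℝ))]
        nlinarith
      linarith

lemma meshY_le_1mly (hm : 1 ≤ m) (hly : 0 ≤ ly) (hly4 : ly ≤ 1/4) {j : ℕ}
    (hj : j ≤ 4*m) : meshY (6*m) ly j ≤ 1 - ly := by
  have hm' := mcast hm
  by_cases h1 : j ≤ (6*m)/3
  · have := (meshY_low hm hly (j := j) (by omega)).2
    linarith
  · have h2 : j ≤ 2*(6*m)/3 := by omega
    rw [meshY, if_neg h1, if_pos h2]
    have hj1' : (2:ℝ)*m + 1 ≤ (j:ℝ) := by exact_mod_cast (by omega : 2*m+1 ≤ j)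
    have hj3 : (j:ℝ) ≤ 4*m := by exact_mod_cast hj
    push_cast
    rw [← sub_nonneg]
    have h6 : (0:ℝ) < 6*(m:ℝ) := by positivity
    have key : (1 - ly) - ((3 * (j:ℝ) / (6*m) - 1) - 3*(2*(j:ℝ) - 6*m)*ly/(6*m))
        = (4*m - (j:ℝ))*(3 - 6*ly)/(6*m) := by field_simp; ring
    have : 0 ≤ (4*(m:ℝ) - (j:ℝ))*(3 - 6*ly)/(6*m) :=
      div_nonneg (mul_nonneg (by linarith) (by linarith)) (by positivity)
    linarith [key]

lemma meshY_ge_1mly (hm : 1 ≤ m) (hly : 0 ≤ ly) {j : ℕ}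
    (hj1 : 4*m ≤ j) (hj2 : j ≤ 6*m) : 1 - ly ≤ meshY (6*m) ly j := by
  have hm' := mcast hm
  rcases eq_or_lt_of_le hj1 with h|h
  · rw [← h, meshY_twothird hm]
  · have h1 : ¬ j ≤ (6*m)/3 := by omega
    have h2 : ¬ j ≤ 2*(6*m)/3 := by omega
    rw [meshY, if_neg h1, if_neg h2]
    have hj4 : (4:ℝ)*m + 1 ≤ (j:ℝ) := by exact_mod_cast (by omega : 4*m+1 ≤ j)
    have hj2' : (j:ℝ) ≤ 6*m := by exact_mod_cast hj2
    push_cast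
    have : 3 * ((6:ℝ)*m - j) * ly / (6*m) ≤ ly := by
      rw [div_le_iff₀ (by positivity : (0:ℝ) < 6*(m:ℝ))]
      nlinarith
    linarith

lemma meshY_mem (hm : 1 ≤ m) (hly : 0 ≤ ly) (hly4 : ly ≤ 1/4) {j : ℕ} (hj : j ≤ 6*m) :
    meshY (6*m) ly j ∈ Icc (0:ℝ) 1 := by
  by_cases h1 : j ≤ 2*m
  · have := meshY_low hm hly (j := j) h1
    exact ⟨this.1, by linarith [this.2]⟩
  · have hge := meshY_ge_ly hm hly hly4 (j := j) (by omega) hj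
    by_cases h2 : j ≤ 4*m
    · have := meshY_le_1mly hm hly hly4 (j := j) h2
      exact ⟨by linarith, by linarith⟩
    · have := meshY_ge_1mly hm hly (j := j) (by omega) hj
      have h1' : ¬ j ≤ (6*m)/3 := by omega
      have h2' : ¬ j ≤ 2*(6*m)/3 := by omega
      have hm' := mcast hm
      have hj2' : (j:ℝ) ≤ 6*m := by exact_mod_cast hj
      refine ⟨by linarith, ?_⟩
      rw [meshY, if_neg h1', if_neg h2']
      push_cast
      have : 0 ≤ 3 * ((6:ℝ)*m - j) * ly / (6*m) :=
        div_nonneg (by nlinarith) (by positivity)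
      linarith

end MeshLemmas

/-- `‖E₁₂ − E₁₂^I‖_{L^∞(Ω₂)} ≤ C N^{-5/2}` and
`‖(E₁₂ − E₁₂^I)_x‖_{L^∞(Ω₁)} ≤ C ε⁻¹ N^{-5/2}` (the derivative of the piecewise bilinear
interpolant is taken rectangle-by-rectangle, i.e. on the interiors of mesh rectangles). -/
theorem corner_layer_interpolation (β C0 : ℝ) (hβ : 0 < β) (hC0 : 0 < C0) :
    ∃ C : ℝ, 0 < C ∧
      ∀ (N : ℕ) (ε lx ly : ℝ) (E12 EI12 : ℝ × ℝ → ℝ),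
        ShishkinHyp N ε β lx ly →
        BoundE12 ε β C0 E12 →
        IsMeshInterpolant N lx ly E12 EI12 →
        (∀ p ∈ Omega2R lx ly, |E12 p - EI12 p| ≤ C * (N : ℝ) ^ (-(5 / 2 : ℝ))) ∧
        (∀ i j : ℕ, 1 ≤ i → i ≤ N → 1 ≤ j → j ≤ N →
          ∀ p ∈ interior (meshRect N lx ly i j) ∩ Omega1R lx ly,
            |pdx (fun q => E12 q - EI12 q) p| ≤ C * ε⁻¹ * (N : ℝ) ^ (-(5 / 2 : ℝ))) := by
  refine ⟨4 * C0, by positivity, ?_⟩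
  intro N ε lx ly E12 EI12 hSh hB hI
  obtain ⟨hN0, h6, hε, hεN, hβpos, hlxdef, hlydef, hlx2, hly4⟩ := hSh
  obtain ⟨m, rfl⟩ := h6
  have hm : 1 ≤ m := by omega
  have hNR : (0:ℝ) < ((6*m : ℕ) : ℝ) := by exact_mod_cast hN0
  have hN1 : (1:ℝ) < ((6*m : ℕ) : ℝ) := by exact_mod_cast (by omega : 1 < 6*m)
  have hlog : 0 < Real.log ((6*m : ℕ) : ℝ) := Real.log_pos hN1
  have hsε : 0 < Real.sqrt ε := Real.sqrt_pos.mpr hε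
  have hlx0 : 0 ≤ lx := by
    rw [hlxdef]
    exact mul_nonneg (div_nonneg (by linarith) hβpos.le) hlog.le
  have hly0 : 0 ≤ ly := by
    rw [hlydef]
    exact mul_nonneg (mul_nonneg (by norm_num) (Real.sqrt_nonneg _)) hlog.le
  set P : ℝ := ((6*m : ℕ) : ℝ) ^ (-(5/2 : ℝ)) with hP
  have hPpos : 0 < P := Real.rpow_pos_of_pos hNR _
  have hPexp : Real.exp (-(5/2) * Real.log ((6*m : ℕ) : ℝ)) = P := by
    rw [hP, Real.rpow_def_of_pos hNR]
    exact congrArg Real.exp (by ring)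
  have hexpX : ∀ x : ℝ, x ≤ 1 - lx → Real.exp (-β*(1-x)/ε) ≤ P := by
    intro x hx
    rw [← hPexp]
    apply Real.exp_le_exp.mpr
    have e1 : β * lx / ε = 5/2 * Real.log ((6*m : ℕ) : ℝ) := by
      rw [hlxdef]; field_simp; ring
    have h2 : β * lx / ε ≤ β * (1-x) / ε := by
      rw [div_le_div_iff₀ hε hε]
      nlinarith [mul_pos hβpos hε]
    have h3 := neg_le_neg h2
    rw [e1] at h3
    calc -β * (1-x) / ε = -(β * (1-x) / ε) := by ring
      _ ≤ -(5/2 * Real.log ((6*m : ℕ) : ℝ)) := h3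
      _ = -(5/2) * Real.log ((6*m : ℕ) : ℝ) := by ring
  have hexpY : ∀ y : ℝ, ly ≤ y → Real.exp (-y/Real.sqrt ε) ≤ P := by
    intro y hy
    rw [← hPexp]
    apply Real.exp_le_exp.mpr
    have e1 : ly / Real.sqrt ε = 5/2 * Real.log ((6*m : ℕ) : ℝ) := by
      rw [hlydef]; field_simp; ring
    have h2 : ly / Real.sqrt ε ≤ y / Real.sqrt ε := by
      rw [div_le_div_iff₀ hsε hsε]
      nlinarith [hsε, hy]
    have h3 := neg_le_neg h2
    rw [e1] at h3
    calc -y / Real.sqrt ε = -(y / Real.sqrt ε) := by ring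
      _ ≤ -(5/2 * Real.log ((6*m : ℕ) : ℝ)) := h3
      _ = -(5/2) * Real.log ((6*m : ℕ) : ℝ) := by ring
  have hexpY1 : ∀ y : ℝ, 0 ≤ y → Real.exp (-y/Real.sqrt ε) ≤ 1 := by
    intro y hy
    apply Real.exp_le_one_iff.mpr
    rw [neg_div]
    exact neg_nonpos.mpr (div_nonneg hy hsε.le)
  -- bound for |E12| at points with x ≤ 1 - lx
  have hnode : ∀ x' y' : ℝ, 0 ≤ x' → x' ≤ 1 - lx → 0 ≤ y' → y' ≤ 1 →
      |E12 (x', y')| ≤ 2 * C0 * P := by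
    intro x' y' hx0 hx1 hy0 hy1
    have hmem : ((x', y') : ℝ × ℝ) ∈ UnitSq := ⟨⟨hx0, by linarith⟩, ⟨hy0, hy1⟩⟩
    have hb := hB.2 0 0 (by norm_num) (x', y') hmem
    simp only [pd, Function.iterate_zero, id_eq, Nat.cast_zero] at hb
    rw [show (-((0:ℝ) + (0:ℝ)/2)) = 0 by norm_num, Real.rpow_zero, mul_one] at hb
    have e1 : Real.exp (-β*(1-x')/ε) ≤ P := hexpX x' hx1
    have e2 : Real.exp (-y'/Real.sqrt ε) ≤ 1 := hexpY1 y' hy0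
    have e3 : Real.exp (-(1-y')/Real.sqrt ε) ≤ 1 := hexpY1 (1-y') (by linarith)
    calc |E12 (x', y')|
        ≤ C0 * Real.exp (-β*(1-x')/ε) *
            (Real.exp (-y'/Real.sqrt ε) + Real.exp (-(1-y')/Real.sqrt ε)) := hb
      _ = C0 * (Real.exp (-β*(1-x')/ε) *
            (Real.exp (-y'/Real.sqrt ε) + Real.exp (-(1-y')/Real.sqrt ε))) := by ring
      _ ≤ C0 * (P * 2) := by
          apply mul_le_mul_of_nonneg_left ?_ hC0.le
          apply mul_le_mul e1 (by linarith) (by positivity) hPpos.le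
      _ = 2 * C0 * P := by ring
  -- bound for |pdx E12| at points with ly ≤ y ≤ 1 - ly
  have hE12d : Differentiable ℝ E12 := hB.1.differentiable (by norm_num)
  have hpdE : ∀ t y' : ℝ, 0 ≤ t → t ≤ 1 → ly ≤ y' → y' ≤ 1 - ly →
      |pdx E12 (t, y')| ≤ 2 * C0 * ε⁻¹ * P := by
    intro t y' ht0 ht1 hyl hyu
    have hmem : ((t, y') : ℝ × ℝ) ∈ UnitSq := ⟨⟨ht0, ht1⟩, ⟨by linarith, by linarith⟩⟩
    have hb := hB.2 1 0 (by norm_num) (t, y') hmem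
    simp only [pd, Function.iterate_one, Function.iterate_zero, id_eq,
      Nat.cast_one, Nat.cast_zero] at hb
    rw [show (-((1:ℝ) + (0:ℝ)/2)) = (-1:ℝ) by norm_num, Real.rpow_neg_one] at hb
    have e1 : Real.exp (-β*(1-t)/ε) ≤ 1 := by
      apply Real.exp_le_one_iff.mpr
      rw [neg_mul, neg_div]
      exact neg_nonpos.mpr (div_nonneg (by nlinarith) hε.le)
    have e2 : Real.exp (-y'/Real.sqrt ε) ≤ P := hexpY y' hyl
    have e3 : Real.exp (-(1-y')/Real.sqrt ε) ≤ P := hexpY (1-y') (by linarith)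
    have hc : (0:ℝ) ≤ C0 * ε⁻¹ := mul_nonneg hC0.le (inv_nonneg.mpr hε.le)
    calc |pdx E12 (t, y')|
        ≤ C0 * ε⁻¹ * Real.exp (-β*(1-t)/ε) *
            (Real.exp (-y'/Real.sqrt ε) + Real.exp (-(1-y')/Real.sqrt ε)) := hb
      _ = C0 * ε⁻¹ * (Real.exp (-β*(1-t)/ε) *
            (Real.exp (-y'/Real.sqrt ε) + Real.exp (-(1-y')/Real.sqrt ε))) := by ring
      _ ≤ C0 * ε⁻¹ * (1 * (P + P)) := by
          apply mul_le_mul_of_nonneg_left ?_ hc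
          apply mul_le_mul e1 (add_le_add e2 e3) (by positivity) (by norm_num)
      _ = 2 * C0 * ε⁻¹ * P := by ring
  constructor
  · -- Part 1: on Ω₂
    rintro ⟨px, py⟩ hp
    obtain ⟨hpx, hpy⟩ := hp
    simp only at hpx hpy
    -- locate x-interval
    have hx0' : meshX (6*m) lx 0 ≤ px := by rw [meshX_zero]; exact hpx.1
    have hxM : px ≤ meshX (6*m) lx (3*m) := by rw [meshX_half hm]; exact hpx.2
    obtain ⟨i, hi1, hi2, hi3, hi4⟩ := exists_index (meshX (6*m) lx) (3*m) (by omega) px hx0' hxM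
    -- locate y-interval
    have hyfind : ∃ j, 1 ≤ j ∧ j ≤ 6*m ∧ meshY (6*m) ly (j-1) ≤ py ∧ py ≤ meshY (6*m) ly j := by
      rcases hpy with hlow | hhigh
      · have h0 : meshY (6*m) ly 0 ≤ py := by rw [meshY_zero]; exact hlow.1
        have hM : py ≤ meshY (6*m) ly (2*m) := by rw [meshY_third hm]; exact hlow.2
        obtain ⟨j, h1, h2, h3, h4⟩ := exists_index (meshY (6*m) ly) (2*m) (by omega) py h0 hM
        exact ⟨j, h1, by omega, h3, h4⟩
      · have h0 : (fun k => meshY (6*m) ly (4*m + k)) 0 ≤ py := by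
          simpa [meshY_twothird hm] using hhigh.1
        have hM : py ≤ (fun k => meshY (6*m) ly (4*m + k)) (2*m) := by
          have : 4*m + 2*m = 6*m := by omega
          simpa [this, meshY_one hm] using hhigh.2
        obtain ⟨k, h1, h2, h3, h4⟩ :=
          exists_index (fun k => meshY (6*m) ly (4*m + k)) (2*m) (by omega) py h0 hM
        refine ⟨4*m + k, by omega, by omega, ?_, h4⟩
        have e : 4*m + k - 1 = 4*m + (k-1) := by omega
        rw [e]; exact h3
    obtain ⟨j, hj1, hj2, hj3, hj4⟩ := hyfind
    -- bilinear coefficients on the rectangle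
    obtain ⟨a, b, c, d, hbl⟩ := hI.2.1 i j hi1 (by omega) hj1 hj2
    have hpmem : ((px, py) : ℝ × ℝ) ∈ meshRect (6*m) lx ly i j := ⟨⟨hi3, hi4⟩, ⟨hj3, hj4⟩⟩
    have hxle : meshX (6*m) lx (i-1) ≤ meshX (6*m) lx i := le_trans hi3 hi4
    have hyle : meshY (6*m) ly (j-1) ≤ meshY (6*m) ly j := le_trans hj3 hj4
    -- corner value bound
    have hcv : ∀ i' j' : ℕ, i' ≤ 3*m → j' ≤ 6*m →
        ((meshX (6*m) lx i', meshY (6*m) ly j') : ℝ × ℝ) ∈ meshRect (6*m) lx ly i j →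
        |a + b * meshX (6*m) lx i' + c * meshY (6*m) ly j' +
          d * (meshX (6*m) lx i' * meshY (6*m) ly j')| ≤ 2 * C0 * P := by
      intro i' j' hi' hj' hmem
      rw [← hbl _ hmem, hI.2.2 i' j' (by omega) hj']
      obtain ⟨hxa, hxb⟩ := meshX_le hm hlx0 hlx2 hi'
      obtain ⟨hya, hyb⟩ := meshY_mem hm hly0 hly4 hj'
      exact hnode _ _ hxa hxb hya hyb
    have hEIbound : |EI12 (px, py)| ≤ 2 * C0 * P := by
      rw [hbl _ hpmem]
      apply bilinear_abs_le (⟨hi3, hi4⟩ : px ∈ Icc _ _) (⟨hj3, hj4⟩ : py ∈ Icc _ _)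
      · exact hcv (i-1) (j-1) (by omega) (by omega) ⟨⟨le_refl _, hxle⟩, ⟨le_refl _, hyle⟩⟩
      · exact hcv i (j-1) (by omega) (by omega) ⟨⟨hxle, le_refl _⟩, ⟨le_refl _, hyle⟩⟩
      · exact hcv (i-1) j (by omega) hj2 ⟨⟨le_refl _, hxle⟩, ⟨hyle, le_refl _⟩⟩
      · exact hcv i j (by omega) hj2 ⟨⟨hxle, le_refl _⟩, ⟨hyle, le_refl _⟩⟩
    have hpy01 : 0 ≤ py ∧ py ≤ 1 := by
      rcases hpy with h | h
      · exact ⟨h.1, by linarith [h.2]⟩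
      · exact ⟨by linarith [h.1], h.2⟩
    have hEbound : |E12 (px, py)| ≤ 2 * C0 * P := hnode px py hpx.1 hpx.2 hpy01.1 hpy01.2
    calc |E12 (px, py) - EI12 (px, py)| ≤ |E12 (px, py)| + |EI12 (px, py)| := abs_sub _ _
      _ ≤ 2 * C0 * P + 2 * C0 * P := add_le_add hEbound hEIbound
      _ = 4 * C0 * P := by ring
  · -- Part 2: derivative bound on Ω₁
    intro i j hi1 hiN hj1 hjN p hp
    obtain ⟨hpint, hpΩ⟩ := hp
    have hpint' := hpint
    rw [meshRect, interior_prod_eq, interior_Icc, interior_Icc] at hpint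
    obtain ⟨hpx, hpy⟩ := hpint
    have hpy1 : ly ≤ p.2 := hpΩ.2.1
    have hpy2 : p.2 ≤ 1 - ly := hpΩ.2.2
    -- the y-corners lie in [ly, 1-ly]
    have hj2m : 2*m ≤ j - 1 := by
      by_contra h
      have hjle : j ≤ 2*m := by omega
      have := (meshY_low hm hly0 hjle).2
      have := hpy.2
      linarith
    have hjle4 : j ≤ 4*m := by
      by_contra h
      have h1 : 4*m ≤ j - 1 := by omega
      have := meshY_ge_1mly hm hly0 h1 (by omega)
      have := hpy.1
      linarith
    have hy1a : ly ≤ meshY (6*m) ly (j-1) := meshY_ge_ly hm hly0 hly4 hj2m (by omega)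
    have hy1b : meshY (6*m) ly (j-1) ≤ 1 - ly := le_trans hpy.1.le hpy2
    have hy2a : ly ≤ meshY (6*m) ly j := le_trans hpy1 hpy.2.le
    have hy2b : meshY (6*m) ly j ≤ 1 - ly := meshY_le_1mly hm hly0 hly4 hjle4
    have hxlt : meshX (6*m) lx (i-1) < meshX (6*m) lx i := lt_trans hpx.1 hpx.2
    -- bilinear coefficients
    obtain ⟨a, b, c, d, hbl⟩ := hI.2.1 i j hi1 hiN hj1 hjN
    have hev : EI12 =ᶠ[nhds p] (fun q : ℝ × ℝ => a + b * q.1 + c * q.2 + d * (q.1 * q.2)) :=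
      Filter.eventuallyEq_of_mem (isOpen_interior.mem_nhds hpint')
        (fun q hq => hbl q (interior_subset hq))
    have hGd : DifferentiableAt ℝ (fun q : ℝ × ℝ => a + b * q.1 + c * q.2 + d * (q.1 * q.2)) p :=
      (hasFDerivAt_bilin a b c d p).differentiableAt
    have hEId : DifferentiableAt ℝ EI12 p := hGd.congr_of_eventuallyEq hev
    have hpdxEI : pdx EI12 p = b + d * p.2 := by
      rw [pdx]
      rw [hev.fderiv_eq]
      exact pdx_bilin a b c d p
    have hsplit : pdx (fun q => E12 q - EI12 q) p = pdx E12 p - (b + d * p.2) := by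
      rw [← hpdxEI]
      simp only [pdx]
      rw [fderiv_fun_sub (hE12d p) hEId]
      simp
    -- MVT bound for corner difference quotients
    have hxa : meshX (6*m) lx (i-1) ∈ Icc (0:ℝ) 1 := meshX_mem hm hlx0 hlx2 (by omega)
    have hxb : meshX (6*m) lx i ∈ Icc (0:ℝ) 1 := meshX_mem hm hlx0 hlx2 hiN
    have hMVT : ∀ y' : ℝ, ly ≤ y' → y' ≤ 1 - ly →
        (a + b * meshX (6*m) lx (i-1) + c * y' + d * (meshX (6*m) lx (i-1) * y')
          = E12 (meshX (6*m) lx (i-1), y')) →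
        (a + b * meshX (6*m) lx i + c * y' + d * (meshX (6*m) lx i * y')
          = E12 (meshX (6*m) lx i, y')) →
        |b + d * y'| ≤ 2 * C0 * ε⁻¹ * P := by
      intro y' hyl hyu heq1 heq2
      have hder : ∀ t ∈ Icc (0:ℝ) 1,
          HasDerivWithinAt (fun t => E12 (t, y')) (fderiv ℝ E12 (t, y') (1, 0)) (Icc 0 1) t := by
        intro t _
        have hι : HasDerivAt (fun t : ℝ => ((t, y') : ℝ × ℝ)) ((1:ℝ), (0:ℝ)) t :=
          (hasDerivAt_id t).prodMk (hasDerivAt_const t y')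
        exact ((hE12d (t, y')).hasFDerivAt.comp_hasDerivAt t hι).hasDerivWithinAt
      have hbound : ∀ t ∈ Icc (0:ℝ) 1, ‖fderiv ℝ E12 (t, y') (1, 0)‖ ≤ 2 * C0 * ε⁻¹ * P := by
        intro t ht
        rw [Real.norm_eq_abs]
        exact hpdE t y' ht.1 ht.2 hyl hyu
      have key := (convex_Icc (0:ℝ) 1).norm_image_sub_le_of_norm_hasDerivWithin_le
        hder hbound hxa hxb
      rw [Real.norm_eq_abs, Real.norm_eq_abs] at key
      have hΔ : 0 < meshX (6*m) lx i - meshX (6*m) lx (i-1) := sub_pos.mpr hxlt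
      have hdiff : E12 (meshX (6*m) lx i, y') - E12 (meshX (6*m) lx (i-1), y')
          = (b + d * y') * (meshX (6*m) lx i - meshX (6*m) lx (i-1)) := by
        rw [← heq1, ← heq2]; ring
      rw [hdiff, abs_mul, abs_of_pos hΔ] at key
      exact le_of_mul_le_mul_right key hΔ
    -- corner equalities
    have hyle : meshY (6*m) ly (j-1) ≤ meshY (6*m) ly j := le_trans hpy.1.le hpy.2.le
    have hceq : ∀ i' j' : ℕ, i' ≤ 6*m → j' ≤ 6*m →
        ((meshX (6*m) lx i', meshY (6*m) ly j') : ℝ × ℝ) ∈ meshRect (6*m) lx ly i j →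
        a + b * meshX (6*m) lx i' + c * meshY (6*m) ly j' +
          d * (meshX (6*m) lx i' * meshY (6*m) ly j') = E12 (meshX (6*m) lx i', meshY (6*m) ly j') := by
      intro i' j' hi' hj' hmem
      rw [← hbl _ hmem, hI.2.2 i' j' hi' hj']
    have h1 := hMVT (meshY (6*m) ly (j-1)) hy1a hy1b
      (hceq (i-1) (j-1) (by omega) (by omega) ⟨⟨le_refl _, hxlt.le⟩, ⟨le_refl _, hyle⟩⟩)
      (hceq i (j-1) hiN (by omega) ⟨⟨hxlt.le, le_refl _⟩, ⟨le_refl _, hyle⟩⟩)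
    have h2 := hMVT (meshY (6*m) ly j) hy2a hy2b
      (hceq (i-1) j (by omega) hjN ⟨⟨le_refl _, hxlt.le⟩, ⟨hyle, le_refl _⟩⟩)
      (hceq i j hiN hjN ⟨⟨hxlt.le, le_refl _⟩, ⟨hyle, le_refl _⟩⟩)
    have haff : |b + d * p.2| ≤ 2 * C0 * ε⁻¹ * P := by
      refine le_trans (affine_abs_le (⟨hpy.1.le, hpy.2.le⟩ : p.2 ∈ Icc _ _)) (max_le h1 h2)
    have hpU : |pdx E12 p| ≤ 2 * C0 * ε⁻¹ * P := by
      have hp1a : (0:ℝ) ≤ p.1 := by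
        have := hpΩ.1.1
        linarith
      have := hpdE p.1 p.2 hp1a hpΩ.1.2 hpy1 hpy2
      simpa using this
    calc |pdx (fun q => E12 q - EI12 q) p| = |pdx E12 p - (b + d * p.2)| := by rw [hsplit]
      _ ≤ |pdx E12 p| + |b + d * p.2| := abs_sub _ _
      _ ≤ 2 * C0 * ε⁻¹ * P + 2 * C0 * ε⁻¹ * P := add_le_add hpU haff
      _ = 4 * C0 * ε⁻¹ * P := by ring
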